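/- S* = −(2nc·φ² + (φ∘A)²). That is, for all X, Y ∈ E, (1/2)·trace(Z ↦ φ(R(X, φY)Z)) = ⟨−(2nc·φ² + (φ∘A)²)X, Y⟩. -/

import Mathlib

open scoped InnerProductSpace

/-- The wedge operator `(X ∧ Y)Z = ⟨Y,Z⟩X − ⟨X,Z⟩Y`. -/
noncomputable def wedge {E : Type*} [NormedAddCommGroup E] [InnerProductSpace ℝ E]
    (X Y : E) : E →ₗ[ℝ] E where
  toFun Z := ⟪Y, Z⟫_ℝ • X - ⟪X, Z⟫_ℝ • Y
  map_add' Z₁ Z₂ := by simp [inner_add_right, add_smul]; abel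
  map_smul' t Z := by simp [inner_smul_right, smul_smul, smul_sub]

lemma trace_rk1 {E : Type*} [NormedAddCommGroup E] [InnerProductSpace ℝ E]
    [FiniteDimensional ℝ E] (u v : E) :
    LinearMap.trace ℝ E (LinearMap.smulRight (innerₛₗ ℝ u) v) = ⟪u, v⟫_ℝ := by
  let b := stdOrthonormalBasis ℝ E
  rw [LinearMap.trace_eq_matrix_trace ℝ b.toBasis, Matrix.trace]
  have : ∀ i, (LinearMap.toMatrix b.toBasis b.toBasis
      (LinearMap.smulRight (innerₛₗ ℝ u) v)).diag i
      = ⟪u, b i⟫_ℝ * ⟪b i, v⟫_ℝ := by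
    intro i
    simp [Matrix.diag, LinearMap.toMatrix_apply, OrthonormalBasis.coe_toBasis,
      OrthonormalBasis.coe_toBasis_repr_apply, OrthonormalBasis.repr_apply_apply,
      real_inner_smul_right, mul_comm]
  rw [Finset.sum_congr rfl fun i _ => this i]
  exact b.sum_inner_mul_inner u v

lemma trace_comp_wedge {E : Type*} [NormedAddCommGroup E] [InnerProductSpace ℝ E]
    [FiniteDimensional ℝ E] (T : E →ₗ[ℝ] E) (u v : E) :
    LinearMap.trace ℝ E (T ∘ₗ wedge u v) = ⟪v, T u⟫_ℝ - ⟪u, T v⟫_ℝ := by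
  have h : T ∘ₗ wedge u v =
      LinearMap.smulRight (innerₛₗ ℝ v) (T u) - LinearMap.smulRight (innerₛₗ ℝ u) (T v) := by
    ext z
    simp [wedge, map_sub, map_smul]
  rw [h, map_sub, trace_rk1, trace_rk1]

/-- S* = −(2nc·φ² + (φ∘A)²), i.e. for all X, Y,
(1/2)·trace(Z ↦ φ(R(X, φY)Z)) = ⟨−(2nc·φ² + (φ∘A)²)X, Y⟩. -/
theorem star_ricci_formula
    {n : ℕ} (hn : 2 ≤ n)
    {E : Type*} [NormedAddCommGroup E] [InnerProductSpace ℝ E] [FiniteDimensional ℝ E]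
    (hdim : Module.finrank ℝ E = 2 * n - 1)
    (W : E) (hW : ‖W‖ = 1)
    (φ : E →ₗ[ℝ] E) (hφskew : ∀ x y : E, ⟪φ x, y⟫_ℝ = - ⟪x, φ y⟫_ℝ)
    (hφW : φ W = 0) (hφφ : ∀ X : E, φ (φ X) = -X + ⟪X, W⟫_ℝ • W)
    (c : ℝ) (hc : c ≠ 0)
    (A : E →ₗ[ℝ] E) (hA : ∀ x y : E, ⟪A x, y⟫_ℝ = ⟪x, A y⟫_ℝ)
    (R : E → E → (E →ₗ[ℝ] E))
    (hR : ∀ X Y : E, R X Y =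
      wedge (A X) (A Y) + c • (wedge X Y + wedge (φ X) (φ Y) + (2 * ⟪X, φ Y⟫_ℝ) • φ)) :
    ∀ X Y : E,
      (1 / 2 : ℝ) * LinearMap.trace ℝ E (φ ∘ₗ R X (φ Y)) =
        ⟪(-((2 * (n : ℝ) * c) • (φ ∘ₗ φ) + (φ ∘ₗ A) ∘ₗ (φ ∘ₗ A))) X, Y⟫_ℝ := by
  intro X Y
  have hWW : ⟪W, W⟫_ℝ = 1 := by
    rw [real_inner_self_eq_norm_sq, hW]; norm_num
  -- trace of φ∘φ
  have hφφmap : φ ∘ₗ φ = LinearMap.smulRight (innerₛₗ ℝ W) W - LinearMap.id := by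
    ext z
    simp [hφφ z, real_inner_comm]
    abel
  have hdimR : ((Module.finrank ℝ E : ℕ) : ℝ) = 2 * (n : ℝ) - 1 := by
    rw [hdim]
    have : (2 : ℕ) * n - 1 = 2 * n - 1 := rfl
    push_cast [Nat.cast_sub (by omega : 1 ≤ 2 * n)]
    ring
  have htrφφ : LinearMap.trace ℝ E (φ ∘ₗ φ) = 2 - 2 * (n : ℝ) := by
    rw [hφφmap, map_sub, trace_rk1, hWW, LinearMap.trace_id, hdimR]
    ring
  -- decompose the composite
  have h1 : φ ∘ₗ R X (φ Y) =
      φ ∘ₗ wedge (A X) (A (φ Y)) +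
        c • (φ ∘ₗ wedge X (φ Y) + φ ∘ₗ wedge (φ X) (φ (φ Y)) +
          (2 * ⟪X, φ (φ Y)⟫_ℝ) • (φ ∘ₗ φ)) := by
    rw [hR]
    ext z
    simp [LinearMap.smul_apply, map_add, map_smul, smul_smul, mul_comm]
  rw [h1, map_add, map_smul, map_add, map_add, map_smul,
    trace_comp_wedge, trace_comp_wedge, trace_comp_wedge, htrφφ]
  -- scalar identities
  set a := ⟪X, Y⟫_ℝ
  set q := ⟪X, W⟫_ℝ * ⟪Y, W⟫_ℝ
  have e1 : ⟪X, φ (φ Y)⟫_ℝ = -a + q := by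
    rw [hφφ]
    simp [inner_add_right, inner_smul_right, a, q]
    ring
  have e2 : ⟪φ Y, φ X⟫_ℝ = a - q := by
    rw [real_inner_comm, hφskew, hφφ]
    simp [inner_add_right, inner_smul_right, real_inner_comm Y W, a, q]
    ring
  have e3 : ⟪φ (φ Y), φ (φ X)⟫_ℝ = a - q := by
    rw [hφφ, hφφ]
    simp [inner_add_left, inner_add_right, inner_smul_left, inner_smul_right, hWW, hW,
      real_inner_comm W X, real_inner_comm W Y, real_inner_comm Y X, a, q]
    ring
  have e4 : ⟪φ X, φ (φ (φ Y))⟫_ℝ = -(a - q) := by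
    have : φ (φ (φ Y)) = - φ Y := by
      rw [hφφ Y, map_add, map_neg, map_smul, hφW, smul_zero, add_zero]
    rw [this, inner_neg_right, real_inner_comm, e2]
  have e5 : ⟪A X, φ (A (φ Y))⟫_ℝ = - ⟪A (φ Y), φ (A X)⟫_ℝ := by
    rw [real_inner_comm, hφskew]
  have e6 : ⟪φ (φ X), Y⟫_ℝ = -a + q := by
    rw [hφφ]
    simp [inner_add_left, inner_smul_left, real_inner_comm W Y, real_inner_comm X Y, a, q]
  have e7 : ⟪φ (A (φ (A X))), Y⟫_ℝ = - ⟪A (φ Y), φ (A X)⟫_ℝ := by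
    rw [hφskew, hA, real_inner_comm (φ (A X)) (A (φ Y))]
  -- now it's pure algebra
  simp only [LinearMap.neg_apply, LinearMap.add_apply, LinearMap.smul_apply,
    LinearMap.comp_apply, inner_neg_left, inner_add_left, inner_smul_left]
  rw [e1, e2, e3, e4, e5, e6, e7]
  simp only [smul_eq_mul, starRingEnd_apply, star_trivial]
  ring
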